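/- arXiv:2410.12614 — 4 statements merged into one kernel-verified Lean document; each statement's English description precedes it below -/
import Mathlib

section
/- If A is a nonsingular n×n real matrix and E is an n×n real matrix, then |det(A+E) - det(A)| ≤ ((‖A^{-1}‖₂ ‖E‖₂ + 1)^n - 1) · |det(A)|. -/
/-- The spectral (operator 2-) norm of a real square matrix. -/
noncomputable def specNorm {n : ℕ} (A : Matrix (Fin n) (Fin n) ℝ) : ℝ :=
  ‖Matrix.toEuclideanCLM (𝕜 := ℝ) A‖

open Matrix Polynomial

lemma specNorm_nonneg {n : ℕ} (A : Matrix (Fin n) (Fin n) ℝ) : 0 ≤ specNorm A :=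
  norm_nonneg _

lemma sq_sum_mulVec_le {n : ℕ} (A : Matrix (Fin n) (Fin n) ℝ) (x : Fin n → ℝ) :
    ∑ i, (A.mulVec x i) ^ 2 ≤ (specNorm A) ^ 2 * ∑ i, (x i) ^ 2 := by
  set y : EuclideanSpace ℝ (Fin n) := (WithLp.equiv 2 (Fin n → ℝ)).symm x
  have happ : Matrix.toEuclideanCLM (𝕜 := ℝ) A y =
      (WithLp.equiv 2 (Fin n → ℝ)).symm (A.mulVec x) := by
    exact Matrix.toEuclideanCLM_toLp A x
  have hle : ‖Matrix.toEuclideanCLM (𝕜 := ℝ) A y‖ ≤ specNorm A * ‖y‖ :=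
    (Matrix.toEuclideanCLM (𝕜 := ℝ) A).le_opNorm y
  have h1 : ‖(WithLp.equiv 2 (Fin n → ℝ)).symm (A.mulVec x)‖ ^ 2 = ∑ i, (A.mulVec x i) ^ 2 := by
    rw [EuclideanSpace.norm_eq, Real.sq_sqrt (by positivity)]
    simp [Real.norm_eq_abs, sq_abs]
  have h2 : ‖y‖ ^ 2 = ∑ i, (x i) ^ 2 := by
    rw [EuclideanSpace.norm_eq, Real.sq_sqrt (by positivity)]
    simp [y, Real.norm_eq_abs, sq_abs]
  calc ∑ i, (A.mulVec x i) ^ 2 = ‖(WithLp.equiv 2 (Fin n → ℝ)).symm (A.mulVec x)‖ ^ 2 := h1.symm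
    _ ≤ (specNorm A * ‖y‖) ^ 2 := by
        rw [← happ]
        apply pow_le_pow_left₀ (norm_nonneg _) hle
    _ = (specNorm A) ^ 2 * ∑ i, (x i) ^ 2 := by rw [mul_pow, h2]

lemma eig_abs_le_specNorm {n : ℕ} (M : Matrix (Fin n) (Fin n) ℝ) (μ : ℂ)
    (v : Fin n → ℂ) (hv : v ≠ 0)
    (h : (M.map (Complex.ofReal)).mulVec v = μ • v) : ‖μ‖ ≤ specNorm M := by
  set a : Fin n → ℝ := fun i => (v i).re
  set b : Fin n → ℝ := fun i => (v i).im
  have hre : ∀ i, M.mulVec a i = (μ * v i).re := by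
    intro i
    have := congrFun h i
    simp only [Matrix.mulVec, dotProduct, Pi.smul_apply, smul_eq_mul] at this
    have hre := congrArg Complex.re this
    simpa [Matrix.mulVec, dotProduct, Complex.ofReal_mul, a] using hre
  have him : ∀ i, M.mulVec b i = (μ * v i).im := by
    intro i
    have := congrFun h i
    simp only [Matrix.mulVec, dotProduct, Pi.smul_apply, smul_eq_mul] at this
    have him := congrArg Complex.im this
    simpa [Matrix.mulVec, dotProduct, b] using him
  have key : (‖μ‖) ^ 2 * (∑ i, ((a i) ^ 2 + (b i) ^ 2)) ≤
      (specNorm M) ^ 2 * (∑ i, ((a i) ^ 2 + (b i) ^ 2)) := by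
    have lhs_eq : ∑ i, ((M.mulVec a i) ^ 2 + (M.mulVec b i) ^ 2) =
        (‖μ‖) ^ 2 * (∑ i, ((a i) ^ 2 + (b i) ^ 2)) := by
      rw [Finset.mul_sum]
      apply Finset.sum_congr rfl
      intro i _
      rw [hre i, him i]
      have h1 : (μ * v i).re ^ 2 + (μ * v i).im ^ 2 = ‖μ * v i‖ ^ 2 := by
        rw [Complex.sq_norm, Complex.normSq_apply]; ring
      have h2 : (a i) ^ 2 + (b i) ^ 2 = ‖v i‖ ^ 2 := by
        rw [Complex.sq_norm, Complex.normSq_apply, pow_two, pow_two]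
      rw [h1, h2, norm_mul, mul_pow]
    calc (‖μ‖) ^ 2 * (∑ i, ((a i) ^ 2 + (b i) ^ 2))
        = ∑ i, ((M.mulVec a i) ^ 2 + (M.mulVec b i) ^ 2) := lhs_eq.symm
      _ = (∑ i, (M.mulVec a i) ^ 2) + (∑ i, (M.mulVec b i) ^ 2) := Finset.sum_add_distrib
      _ ≤ (specNorm M) ^ 2 * (∑ i, (a i) ^ 2) + (specNorm M) ^ 2 * (∑ i, (b i) ^ 2) :=
          add_le_add (sq_sum_mulVec_le M a) (sq_sum_mulVec_le M b)
      _ = (specNorm M) ^ 2 * (∑ i, ((a i) ^ 2 + (b i) ^ 2)) := by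
          rw [← mul_add, ← Finset.sum_add_distrib]
  have hpos : 0 < ∑ i, ((a i) ^ 2 + (b i) ^ 2) := by
    obtain ⟨j, hj⟩ := Function.ne_iff.mp hv
    have hterm : 0 < (a j) ^ 2 + (b j) ^ 2 := by
      rcases Complex.ext_iff.not.mp hj with h'
      push_neg at h'
      by_contra hc
      push_neg at hc
      have ha0 : a j = 0 ∧ b j = 0 := by
        constructor <;> nlinarith [sq_nonneg (a j), sq_nonneg (b j)]
      exact hj (Complex.ext ha0.1 ha0.2)
    exact Finset.sum_pos' (fun i _ => by positivity) ⟨j, Finset.mem_univ j, hterm⟩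
  have hsq : (‖μ‖) ^ 2 ≤ (specNorm M) ^ 2 := le_of_mul_le_mul_right
    (by simpa [mul_comm] using key) hpos
  have := Real.sqrt_le_sqrt hsq
  rwa [Real.sqrt_sq (by positivity), Real.sqrt_sq (specNorm_nonneg M)] at this

lemma multiset_prod_sub_one_bound (x : ℝ) (hx : 0 ≤ x) (s : Multiset ℂ)
    (h : ∀ μ ∈ s, ‖μ - 1‖ ≤ x) :
    ‖s.prod - 1‖ ≤ (1 + x) ^ (Multiset.card s) - 1 := by
  induction s using Multiset.induction with
  | empty => simp
  | cons μ t ih =>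
    have hμ : ‖μ - 1‖ ≤ x := h μ (Multiset.mem_cons_self μ t)
    have ht : ‖t.prod - 1‖ ≤ (1 + x) ^ (Multiset.card t) - 1 :=
      ih (fun ν hν => h ν (Multiset.mem_cons_of_mem hν))
    have habsμ : ‖μ‖ ≤ 1 + x := by
      calc ‖μ‖ = ‖1 + (μ - 1)‖ := by ring_nf
        _ ≤ ‖1‖ + ‖μ - 1‖ := norm_add_le _ _
        _ ≤ 1 + x := by simpa using hμ
    rw [Multiset.prod_cons, Multiset.card_cons]
    have key : μ * t.prod - 1 = μ * (t.prod - 1) + (μ - 1) := by ring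
    calc ‖μ * t.prod - 1‖
        ≤ ‖μ * (t.prod - 1)‖ + ‖μ - 1‖ := by
          rw [key]; exact norm_add_le _ _
      _ = ‖μ‖ * ‖t.prod - 1‖ + ‖μ - 1‖ := by rw [norm_mul]
      _ ≤ (1 + x) * ((1 + x) ^ (Multiset.card t) - 1) + x := by
          have h1 : (0:ℝ) ≤ ‖μ‖ := norm_nonneg μ
          have := mul_le_mul habsμ ht (norm_nonneg _) (by linarith)
          exact add_le_add this hμ
      _ = (1 + x) ^ (Multiset.card t + 1) - 1 := by ring

lemma eval_charpoly_eq_det {n : ℕ} (B : Matrix (Fin n) (Fin n) ℂ) (μ : ℂ) :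
    (Matrix.charpoly B).eval μ = (Matrix.scalar (Fin n) μ - B).det := by
  rw [Matrix.charpoly, _root_.eval_det, matPolyEquiv_charmatrix]
  congr 1
  simp [eval_sub, eval_X, eval_C]

lemma det_one_add_bound {n : ℕ} (M : Matrix (Fin n) (Fin n) ℝ) :
    |(1 + M).det - 1| ≤ (specNorm M + 1) ^ n - 1 := by
  set N : Matrix (Fin n) (Fin n) ℂ := M.map Complex.ofReal
  set B : Matrix (Fin n) (Fin n) ℂ := 1 + N
  have hdet : B.det = ((1 + M).det : ℂ) := by
    have : B = (Complex.ofRealHom.mapMatrix : Matrix (Fin n) (Fin n) ℝ →+*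
        Matrix (Fin n) (Fin n) ℂ) (1 + M) := by
      simp only [B, N, RingHom.mapMatrix_apply, Matrix.map_add]
      congr 1
      ext i j
      by_cases hij : i = j <;> simp [Matrix.one_apply, hij]
    rw [this, ← RingHom.map_det]
    rfl
  have hprod : B.det = (Matrix.charpoly B).roots.prod := det_eq_prod_roots_charpoly B
  have hroot : ∀ μ ∈ (Matrix.charpoly B).roots, ‖μ - 1‖ ≤ specNorm M := by
    intro μ hμ
    have hz : (Matrix.charpoly B).eval μ = 0 := by
      have := Polynomial.isRoot_of_mem_roots hμ
      exact this
    rw [eval_charpoly_eq_det] at hz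
    obtain ⟨v, hv, hv0⟩ := Matrix.exists_mulVec_eq_zero_iff.mpr hz
    have heig : N.mulVec v = (μ - 1) • v := by
      have h1 : (Matrix.scalar (Fin n) μ - B).mulVec v = 0 := hv0
      have h2 : Matrix.scalar (Fin n) μ - B = (μ - 1) • (1 : Matrix (Fin n) (Fin n) ℂ) - N := by
        simp [B, Matrix.scalar, sub_smul, Matrix.smul_eq_diagonal_mul]
        ext i j
        by_cases hij : i = j <;> simp [hij, Matrix.one_apply, sub_sub]
      rw [h2, Matrix.sub_mulVec, Matrix.smul_mulVec, Matrix.one_mulVec, sub_eq_zero] at h1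
      exact h1.symm
    exact eig_abs_le_specNorm M (μ - 1) v hv heig
  have hcard : (Multiset.card (Matrix.charpoly B).roots) ≤ n := by
    have h1 := Polynomial.card_roots' (Matrix.charpoly B)
    rwa [Matrix.charpoly_natDegree_eq_dim, Fintype.card_fin] at h1
  have hb := multiset_prod_sub_one_bound (specNorm M) (specNorm_nonneg M)
    (Matrix.charpoly B).roots hroot
  have habs : ‖B.det - 1‖ = |(1 + M).det - 1| := by
    rw [hdet]
    rw [show ((1 + M).det : ℂ) - 1 = (((1 + M).det - 1 : ℝ) : ℂ) by push_cast; ring]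
    rw [Complex.norm_real, Real.norm_eq_abs]
  have hmono : (1 + specNorm M) ^ (Multiset.card (Matrix.charpoly B).roots) ≤
      (1 + specNorm M) ^ n :=
    pow_le_pow_right₀ (by linarith [specNorm_nonneg M]) hcard
  rw [← habs, hprod]
  calc ‖(Matrix.charpoly B).roots.prod - 1‖
      ≤ (1 + specNorm M) ^ (Multiset.card (Matrix.charpoly B).roots) - 1 := hb
    _ ≤ (1 + specNorm M) ^ n - 1 := by linarith
    _ = (specNorm M + 1) ^ n - 1 := by rw [add_comm]

lemma specNorm_mul_le {n : ℕ} (A B : Matrix (Fin n) (Fin n) ℝ) :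
    specNorm (A * B) ≤ specNorm A * specNorm B := by
  unfold specNorm
  rw [_root_.map_mul]
  exact norm_mul_le _ _

theorem stmt5 (n : ℕ) (A E : Matrix (Fin n) (Fin n) ℝ) (hA : IsUnit A.det) :
    |(A + E).det - A.det| ≤ ((specNorm A⁻¹ * specNorm E + 1) ^ n - 1) * |A.det| := by
  set M := A⁻¹ * E with hM
  have hfact : A + E = A * (1 + M) := by
    rw [Matrix.mul_add, mul_one, hM, ← Matrix.mul_assoc, Matrix.mul_nonsing_inv A hA,
      Matrix.one_mul]
  have hdet : (A + E).det - A.det = A.det * ((1 + M).det - 1) := by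
    rw [hfact, Matrix.det_mul]; ring
  rw [hdet, abs_mul]
  have h1 : |(1 + M).det - 1| ≤ (specNorm M + 1) ^ n - 1 := det_one_add_bound M
  have h2 : specNorm M ≤ specNorm A⁻¹ * specNorm E := specNorm_mul_le A⁻¹ E
  have h3 : (specNorm M + 1) ^ n ≤ (specNorm A⁻¹ * specNorm E + 1) ^ n :=
    pow_le_pow_left₀ (by linarith [specNorm_nonneg M]) (by linarith) n
  calc |A.det| * |(1 + M).det - 1|
      ≤ |A.det| * ((specNorm A⁻¹ * specNorm E + 1) ^ n - 1) := by
        apply mul_le_mul_of_nonneg_left _ (abs_nonneg _)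
        linarith
    _ = ((specNorm A⁻¹ * specNorm E + 1) ^ n - 1) * |A.det| := mul_comm _ _
end

section
/- For a nonsingular n×n real matrix A and any ε with 0 ≤ n‖A^{-1}‖₂‖E‖₂ small enough (e.g. ‖A^{-1}‖₂‖E‖₂ ≤ 1/n), there exists a constant c (depending only on n, e.g. c = e) such that |det(A+E) - det(A)| ≤ c·n·‖A^{-1}‖₂·‖E‖₂·|det(A)|. -/
open Matrix
open scoped Matrix.Norms.L2Operator

lemma specNorm_eq {n : ℕ} (A : Matrix (Fin n) (Fin n) ℝ) : specNorm A = ‖A‖ :=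
  (Matrix.cstar_norm_def A).symm

lemma euclid_apply_le {n : ℕ} (v : EuclideanSpace ℝ (Fin n)) (i : Fin n) : |v i| ≤ ‖v‖ := by
  rw [EuclideanSpace.norm_eq]
  have : |v i| = Real.sqrt (|v i|^2) := by rw [Real.sqrt_sq_eq_abs]; exact (abs_abs _).symm
  rw [this]
  apply Real.sqrt_le_sqrt
  have : |v i|^2 = ‖v i‖^2 := by rw [Real.norm_eq_abs]
  rw [this]
  exact Finset.single_le_sum (f := fun j => ‖v j‖^2) (fun j _ => by positivity) (Finset.mem_univ i)

lemma entry_le {n : ℕ} (M : Matrix (Fin n) (Fin n) ℝ) (i j : Fin n) : |M i j| ≤ ‖M‖ := by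
  have h := Matrix.l2_opNorm_mulVec M ((EuclideanSpace.equiv (Fin n) ℝ).symm (Pi.single j 1))
  have hx : ‖(EuclideanSpace.equiv (Fin n) ℝ).symm (Pi.single j (1:ℝ))‖ = 1 := by
    simpa using EuclideanSpace.norm_single (𝕜 := ℝ) j 1
  calc |M i j| = |((EuclideanSpace.equiv (Fin n) ℝ).symm (M *ᵥ (Pi.single j 1)) : EuclideanSpace ℝ (Fin n)) i| := by
        simp [Matrix.mulVec_single]
    _ ≤ ‖((EuclideanSpace.equiv (Fin n) ℝ).symm (M *ᵥ (Pi.single j 1)) : EuclideanSpace ℝ (Fin n))‖ :=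
        euclid_apply_le _ i
    _ ≤ ‖M‖ := by
        rw [hx, mul_one] at h; exact h

lemma det_piecewise_le {n : ℕ} (A E : Matrix (Fin n) (Fin n) ℝ) (hA : IsUnit A.det)
    (s : Finset (Fin n)) (hs : s.Nonempty) {x : ℝ} (hx1 : x ≤ 1)
    (hB : ∀ i j, |(E * A⁻¹) i j| ≤ x) :
    |(Matrix.of (s.piecewise E A)).det| ≤ (n.factorial : ℝ) * x * |A.det| := by
  have hx0 : 0 ≤ x := le_trans (abs_nonneg _) (hB hs.choose hs.choose)
  set D : Matrix (Fin n) (Fin n) ℝ := Matrix.of (s.piecewise (E * A⁻¹) (1 : Matrix (Fin n) (Fin n) ℝ)) with hD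
  have hfac : Matrix.of (s.piecewise E A) = D * A := by
    ext i j
    rw [Matrix.mul_apply]
    by_cases h : i ∈ s
    · simp only [Matrix.of_apply, s.piecewise_eq_of_mem (f := E) (g := A) h, hD, s.piecewise_eq_of_mem (f := E * A⁻¹) (g := (1 : Matrix (Fin n) (Fin n) ℝ)) h]
      rw [← Matrix.mul_apply, Matrix.mul_assoc, Matrix.nonsing_inv_mul A hA, Matrix.mul_one]
    · simp only [Matrix.of_apply, s.piecewise_eq_of_notMem (f := E) (g := A) h, hD, s.piecewise_eq_of_notMem (f := E * A⁻¹) (g := (1 : Matrix (Fin n) (Fin n) ℝ)) h]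
      rw [← Matrix.mul_apply, Matrix.one_mul]
  rw [hfac, Matrix.det_mul, abs_mul]
  gcongr
  -- |D.det| ≤ n! * x
  obtain ⟨i0, hi0⟩ := hs
  have key : ∀ σ : Equiv.Perm (Fin n), |∏ i, D (σ i) i| ≤ x := by
    intro σ
    rw [Finset.abs_prod]
    have hone : ∀ i : Fin n, |D (σ i) i| ≤ 1 := by
      intro i
      by_cases h : σ i ∈ s
      · simp only [hD, Matrix.of_apply, s.piecewise_eq_of_mem (f := E * A⁻¹) (g := (1 : Matrix (Fin n) (Fin n) ℝ)) h]
        exact le_trans (hB _ _) hx1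
      · simp only [hD, Matrix.of_apply, s.piecewise_eq_of_notMem (f := E * A⁻¹) (g := (1 : Matrix (Fin n) (Fin n) ℝ)) h]
        rw [Matrix.one_apply]
        split <;> simp
    have hmem : σ⁻¹ i0 ∈ Finset.univ := Finset.mem_univ _
    rw [← Finset.mul_prod_erase _ _ hmem]
    have h1 : |D (σ (σ⁻¹ i0)) (σ⁻¹ i0)| ≤ x := by
      rw [← Equiv.Perm.mul_apply, mul_inv_cancel, Equiv.Perm.one_apply]
      simp only [hD, Matrix.of_apply, s.piecewise_eq_of_mem (f := E * A⁻¹) (g := (1 : Matrix (Fin n) (Fin n) ℝ)) hi0]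
      exact hB _ _
    calc |D (σ (σ⁻¹ i0)) (σ⁻¹ i0)| * ∏ i ∈ Finset.univ.erase (σ⁻¹ i0), |D (σ i) i|
        ≤ x * 1 := by
          apply mul_le_mul h1 ?_ (Finset.prod_nonneg fun i _ => abs_nonneg _) hx0
          exact Finset.prod_le_one (fun i _ => abs_nonneg _) (fun i _ => hone i)
      _ = x := mul_one x
  calc |D.det| ≤ ∑ σ : Equiv.Perm (Fin n), |(Equiv.Perm.sign σ : ℤ) * ∏ i, D (σ i) i| := by
        rw [Matrix.det_apply]
        refine le_trans (Finset.abs_sum_le_sum_abs _ _) ?_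
        apply le_of_eq
        congr 1; ext σ
        rw [Units.smul_def, zsmul_eq_mul]
    _ ≤ ∑ σ : Equiv.Perm (Fin n), x := by
        apply Finset.sum_le_sum
        intro σ _
        rw [abs_mul]
        calc |((Equiv.Perm.sign σ : ℤ) : ℝ)| * |∏ i, D (σ i) i|
            = |∏ i, D (σ i) i| := by
              rcases Int.units_eq_one_or (Equiv.Perm.sign σ) with h | h <;> simp [h]
          _ ≤ x := key σ
    _ = (n.factorial : ℝ) * x := by
        rw [Finset.sum_const, Finset.card_univ, Fintype.card_perm, Fintype.card_fin, nsmul_eq_mul]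

theorem stmt6 (n : ℕ) (hn : 0 < n) :
    ∃ c : ℝ, 0 < c ∧
      ∀ (A E : Matrix (Fin n) (Fin n) ℝ), IsUnit A.det →
        specNorm A⁻¹ * specNorm E ≤ 1 / (n : ℝ) →
        |(A + E).det - A.det| ≤ c * (n : ℝ) * specNorm A⁻¹ * specNorm E * |A.det| := by
  refine ⟨2^n * n.factorial, by positivity, fun A E hA hx => ?_⟩
  have hn1 : (1 : ℝ) ≤ n := by exact_mod_cast hn
  set x : ℝ := specNorm A⁻¹ * specNorm E with hxdef
  have hx0 : 0 ≤ x := mul_nonneg (norm_nonneg _) (norm_nonneg _)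
  have hx1 : x ≤ 1 := le_trans hx (by rw [div_le_one (by positivity)]; exact hn1)
  -- entry bound on E * A⁻¹
  have hB : ∀ i j, |(E * A⁻¹) i j| ≤ x := by
    intro i j
    calc |(E * A⁻¹) i j| ≤ ‖E * A⁻¹‖ := entry_le _ i j
      _ ≤ ‖E‖ * ‖A⁻¹‖ := Matrix.l2_opNorm_mul E A⁻¹
      _ = x := by rw [hxdef, specNorm_eq, specNorm_eq, mul_comm]
  -- determinant expansion
  have hexp : (A + E).det = ∑ s : Finset (Fin n), (Matrix.of (s.piecewise E A)).det := by
    have h := (Matrix.detRowAlternating (n := Fin n) (R := ℝ)).toMultilinearMap.map_add_univ E A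
    rw [add_comm A E]
    exact h
  have hsplit : (A + E).det - A.det
      = ∑ s ∈ (Finset.univ : Finset (Finset (Fin n))).erase ∅, (Matrix.of (s.piecewise E A)).det := by
    rw [hexp, ← Finset.add_sum_erase _ _ (Finset.mem_univ (∅ : Finset (Fin n)))]
    simp only [Finset.piecewise_empty (f := E) (g := A)]
    have : (Matrix.of A : Matrix (Fin n) (Fin n) ℝ) = A := rfl
    rw [this]
    ring
  rw [hsplit]
  calc |∑ s ∈ (Finset.univ : Finset (Finset (Fin n))).erase ∅, (Matrix.of (s.piecewise E A)).det|
      ≤ ∑ s ∈ (Finset.univ : Finset (Finset (Fin n))).erase ∅, |(Matrix.of (s.piecewise E A)).det| :=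
        Finset.abs_sum_le_sum_abs _ _
    _ ≤ ∑ s ∈ (Finset.univ : Finset (Finset (Fin n))).erase ∅, (n.factorial : ℝ) * x * |A.det| := by
        apply Finset.sum_le_sum
        intro s hs
        have hne : s.Nonempty := Finset.nonempty_iff_ne_empty.2 (Finset.ne_of_mem_erase hs)
        exact det_piecewise_le A E hA s hne hx1 hB
    _ ≤ 2^n * (n.factorial : ℝ) * ((n : ℝ) * x * |A.det|) := by
        rw [Finset.sum_const, nsmul_eq_mul]
        have hcard : (((Finset.univ : Finset (Finset (Fin n))).erase ∅).card : ℝ) ≤ 2^n := by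
          calc (((Finset.univ : Finset (Finset (Fin n))).erase ∅).card : ℝ)
              ≤ ((Finset.univ : Finset (Finset (Fin n))).card : ℝ) := by
                exact_mod_cast Finset.card_le_card (Finset.erase_subset _ _)
            _ = 2^n := by rw [Finset.card_univ]; simp [Fintype.card_finset]
        calc (((Finset.univ : Finset (Finset (Fin n))).erase ∅).card : ℝ) * ((n.factorial : ℝ) * x * |A.det|)
            ≤ 2^n * ((n.factorial : ℝ) * x * |A.det|) := by
              apply mul_le_mul_of_nonneg_right hcard (by positivity)
          _ ≤ 2^n * (n.factorial : ℝ) * ((n : ℝ) * x * |A.det|) := by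
              have h1 : x * |A.det| ≤ (n : ℝ) * x * |A.det| := by
                nlinarith [mul_nonneg hx0 (abs_nonneg A.det)]
              calc (2:ℝ)^n * ((n.factorial : ℝ) * x * |A.det|)
                  = 2^n * (n.factorial : ℝ) * (x * |A.det|) := by ring
                _ ≤ 2^n * (n.factorial : ℝ) * ((n : ℝ) * x * |A.det|) :=
                    mul_le_mul_of_nonneg_left h1 (by positivity)
    _ = 2^n * (n.factorial : ℝ) * (n : ℝ) * specNorm A⁻¹ * specNorm E * |A.det| := by
        rw [hxdef]; ring
end

section
/- Let φ(x) = w·∏_{i=1}^m ℓ_i(x) with each ℓ_i affine and ∂_s ℓ_j ∈ {+1, −1} for all j. Then for the partial derivative ∂_s φ(x) = w·∑_{j=1}^m (∂_s ℓ_j)·∏_{i≠j} ℓ_i(x), the finite-precision evaluation (with each ℓ_i evaluated with relative error θ_r, each product and sum operation carrying a (1+δ) factor with |δ| ≤ u) satisfies |∂_s φ(x) − computed value| ≤ γ_{(m−1)(r+1)} · ∑_{j=1}^m |φ(x)/ℓ_j(x)|, for all x with ℓ_j(x) ≠ 0 for all j. -/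
private lemma err_mul (u a b x y : ℝ) (hu : 0 < u) (ha : 0 ≤ a) (hb : 0 ≤ b)
    (hab : (a + b) * u < 1)
    (hx : |x - 1| ≤ a * u / (1 - a * u)) (hy : |y - 1| ≤ b * u / (1 - b * u)) :
    |x * y - 1| ≤ (a + b) * u / (1 - (a + b) * u) := by
  have ha1 : a * u < 1 := by nlinarith
  have hb1 : b * u < 1 := by nlinarith
  have ha1' : 0 < 1 - a * u := by linarith
  have hb1' : 0 < 1 - b * u := by linarith
  have hab' : 0 < 1 - (a + b) * u := by linarith
  have hga : 0 ≤ a * u / (1 - a * u) := div_nonneg (by positivity) (by linarith)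
  have hgb : 0 ≤ b * u / (1 - b * u) := div_nonneg (by positivity) (by linarith)
  have key : a * u / (1 - a * u) + b * u / (1 - b * u) +
      (a * u / (1 - a * u)) * (b * u / (1 - b * u))
      ≤ (a + b) * u / (1 - (a + b) * u) := by
    rw [div_add_div _ _ (ne_of_gt ha1') (ne_of_gt hb1'), div_mul_div_comm,
      div_add_div _ _ (by positivity) (by positivity), div_le_div_iff₀ (by positivity) hab']
    nlinarith [mul_nonneg ha hb, mul_nonneg (mul_nonneg ha hb) (mul_nonneg hu.le hu.le),
      mul_pos ha1' hb1']
  have habs : 0 ≤ |x - 1| := abs_nonneg _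
  calc |x * y - 1| = |(x - 1) + (y - 1) + (x - 1) * (y - 1)| := by ring_nf
    _ ≤ |(x - 1) + (y - 1)| + |(x - 1) * (y - 1)| := abs_add_le _ _
    _ ≤ (|x - 1| + |y - 1|) + |x - 1| * |y - 1| := by
        rw [abs_mul]; exact add_le_add (abs_add_le _ _) le_rfl
    _ ≤ (a * u / (1 - a * u) + b * u / (1 - b * u)) +
        (a * u / (1 - a * u)) * (b * u / (1 - b * u)) := by
        gcongr <;> first | exact hx | exact hy
    _ ≤ (a + b) * u / (1 - (a + b) * u) := by linarith [key]

private lemma prod_err {ι : Type*} [DecidableEq ι] (u r' : ℝ) (hu : 0 < u) (hr' : 0 ≤ r')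
    (S : Finset ι) (τ : ι → ℝ) (hτ : ∀ i ∈ S, |τ i| ≤ r' * u / (1 - r' * u))
    (h : ((S.card : ℝ) * r') * u < 1) :
    |∏ i ∈ S, (1 + τ i) - 1| ≤ (S.card : ℝ) * r' * u / (1 - (S.card : ℝ) * r' * u) := by
  induction S using Finset.cons_induction with
  | empty => simp
  | cons a S haS ih =>
    have hcard : ((Finset.cons a S haS).card : ℝ) = (S.card : ℝ) + 1 := by
      rw [Finset.card_cons]; push_cast; ring
    rw [hcard] at h ⊢
    have hcr : 0 ≤ (S.card : ℝ) * r' := by positivity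
    have hIH : |∏ i ∈ S, (1 + τ i) - 1| ≤ (S.card : ℝ) * r' * u / (1 - (S.card : ℝ) * r' * u) := by
      apply ih (fun i hi => hτ i (Finset.mem_cons_of_mem hi))
      nlinarith
    have hxa : |(1 + τ a) - 1| ≤ r' * u / (1 - r' * u) := by
      simpa using hτ a (Finset.mem_cons_self a S)
    have := err_mul u r' ((S.card : ℝ) * r') (1 + τ a) (∏ i ∈ S, (1 + τ i)) hu hr' hcr
      (by nlinarith) hxa hIH
    rw [Finset.prod_cons]
    calc |(1 + τ a) * ∏ i ∈ S, (1 + τ i) - 1|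
        ≤ (r' + (S.card : ℝ) * r') * u / (1 - (r' + (S.card : ℝ) * r') * u) := this
      _ = ((S.card : ℝ) + 1) * r' * u / (1 - ((S.card : ℝ) + 1) * r' * u) := by ring_nf

theorem stmt8 (u : ℝ) (hu : u ∈ Set.Ioo (0 : ℝ) 1) (m r : ℕ) (hm : 1 ≤ m)
    (hr : (r : ℝ) * u < 1)
    (hmr : (((m - 1) * (r + 1) : ℕ) : ℝ) * u < 1)
    (w : ℝ) (ℓ : Fin m → ℝ) (hℓ : ∀ j, ℓ j ≠ 0)
    (dℓ : Fin m → ℝ) (hd : ∀ j, dℓ j = 1 ∨ dℓ j = -1)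
    (τ : Fin m → ℝ) (hτ : ∀ i, |τ i| ≤ (r : ℝ) * u / (1 - (r : ℝ) * u))
    (σ : Fin m → ℝ)
    (hσ : ∀ j, |σ j| ≤ ((m - 1 : ℕ) : ℝ) * u / (1 - ((m - 1 : ℕ) : ℝ) * u))
    (φ dφ dφhat : ℝ)
    (hφ : φ = w * ∏ i, ℓ i)
    (hdφ : dφ = w * ∑ j, dℓ j * ∏ i ∈ Finset.univ.erase j, ℓ i)
    (hdφhat : dφhat =
      w * ∑ j, dℓ j * (∏ i ∈ Finset.univ.erase j, (ℓ i * (1 + τ i))) * (1 + σ j)) :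
    |dφ - dφhat| ≤
      (((m - 1) * (r + 1) : ℕ) : ℝ) * u / (1 - (((m - 1) * (r + 1) : ℕ) : ℝ) * u) *
        ∑ j, |φ / ℓ j| := by
  obtain ⟨hu0, hu1⟩ := hu
  set M : ℕ := m - 1 with hM
  have hNcast : (((m - 1) * (r + 1) : ℕ) : ℝ) = ((M : ℝ) * (r : ℝ) + (M : ℝ)) * 1 + 0 := by
    push_cast [hM]; ring
  have hNu : ((M : ℝ) * (r : ℝ) + (M : ℝ)) * u < 1 := by
    have : (((m - 1) * (r + 1) : ℕ) : ℝ) = (M : ℝ) * (r : ℝ) + (M : ℝ) := by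
      push_cast [hM]; ring
    linarith [hmr, this ▸ hmr]
  -- per-term error factors
  have hcard : ∀ j : Fin m, ((Finset.univ.erase j).card : ℝ) = (M : ℝ) := by
    intro j
    rw [Finset.card_erase_of_mem (Finset.mem_univ j), Finset.card_univ, Fintype.card_fin]
  have hE : ∀ j : Fin m,
      |(∏ i ∈ Finset.univ.erase j, (1 + τ i)) * (1 + σ j) - 1| ≤
        ((M : ℝ) * (r : ℝ) + (M : ℝ)) * u / (1 - ((M : ℝ) * (r : ℝ) + (M : ℝ)) * u) := by
    intro j
    have hMr : 0 ≤ (M : ℝ) * (r : ℝ) := by positivity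
    have hMru : ((M : ℝ) * (r : ℝ)) * u < 1 := by
      nlinarith [Nat.cast_nonneg (α := ℝ) M, mul_pos hu0 hu0]
    have hprod : |∏ i ∈ Finset.univ.erase j, (1 + τ i) - 1| ≤
        (M : ℝ) * (r : ℝ) * u / (1 - (M : ℝ) * (r : ℝ) * u) := by
      have := prod_err u (r : ℝ) hu0 (Nat.cast_nonneg r) (Finset.univ.erase j) τ
        (fun i _ => hτ i) (by rw [hcard j]; exact hMru)
      rwa [hcard j] at this
    have hσ' : |(1 + σ j) - 1| ≤ (M : ℝ) * u / (1 - (M : ℝ) * u) := by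
      simpa using hσ j
    exact err_mul u ((M : ℝ) * (r : ℝ)) (M : ℝ) _ _ hu0 hMr (Nat.cast_nonneg M) hNu
      hprod hσ'
  -- rewrite difference
  have hsplit : ∀ j : Fin m,
      (∏ i ∈ Finset.univ.erase j, (ℓ i * (1 + τ i))) =
        (∏ i ∈ Finset.univ.erase j, ℓ i) * ∏ i ∈ Finset.univ.erase j, (1 + τ i) :=
    fun j => Finset.prod_mul_distrib
  have hdiff : dφ - dφhat = ∑ j, (w * dℓ j * ∏ i ∈ Finset.univ.erase j, ℓ i) *
      (1 - (∏ i ∈ Finset.univ.erase j, (1 + τ i)) * (1 + σ j)) := by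
    rw [hdφ, hdφhat, Finset.mul_sum, Finset.mul_sum, ← Finset.sum_sub_distrib]
    apply Finset.sum_congr rfl
    intro j _
    rw [hsplit j]; ring
  have hφℓ : ∀ j : Fin m, |φ / ℓ j| = |w| * |∏ i ∈ Finset.univ.erase j, ℓ i| := by
    intro j
    have : φ / ℓ j = w * ∏ i ∈ Finset.univ.erase j, ℓ i := by
      rw [hφ, ← Finset.mul_prod_erase Finset.univ ℓ (Finset.mem_univ j)]
      field_simp [hℓ j]
      try ring
    rw [this, abs_mul]
  set g : ℝ := ((M : ℝ) * (r : ℝ) + (M : ℝ)) * u / (1 - ((M : ℝ) * (r : ℝ) + (M : ℝ)) * u)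
    with hg
  have hgoalN : (((m - 1) * (r + 1) : ℕ) : ℝ) * u / (1 - (((m - 1) * (r + 1) : ℕ) : ℝ) * u)
      = g := by
    have : (((m - 1) * (r + 1) : ℕ) : ℝ) = (M : ℝ) * (r : ℝ) + (M : ℝ) := by
      push_cast [hM]; ring
    rw [hg, this]
  rw [hgoalN, hdiff]
  calc |∑ j, (w * dℓ j * ∏ i ∈ Finset.univ.erase j, ℓ i) *
        (1 - (∏ i ∈ Finset.univ.erase j, (1 + τ i)) * (1 + σ j))|
      ≤ ∑ j, |(w * dℓ j * ∏ i ∈ Finset.univ.erase j, ℓ i) *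
        (1 - (∏ i ∈ Finset.univ.erase j, (1 + τ i)) * (1 + σ j))| :=
        Finset.abs_sum_le_sum_abs _ _
    _ ≤ ∑ j, |φ / ℓ j| * g := by
        apply Finset.sum_le_sum
        intro j _
        rw [abs_mul, hφℓ j]
        have hdj : |dℓ j| = 1 := by rcases hd j with h | h <;> simp [h]
        have h1 : |w * dℓ j * ∏ i ∈ Finset.univ.erase j, ℓ i| =
            |w| * |∏ i ∈ Finset.univ.erase j, ℓ i| := by
          rw [abs_mul, abs_mul, hdj]; ring
        rw [h1]
        have h2 : |1 - (∏ i ∈ Finset.univ.erase j, (1 + τ i)) * (1 + σ j)| ≤ g := by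
          rw [abs_sub_comm]; exact hE j
        exact mul_le_mul_of_nonneg_left h2 (by positivity)
    _ = g * ∑ j, |φ / ℓ j| := by rw [← Finset.sum_mul]; ring
end

section
/- Let z_h(x) = ∑_{i=1}^{n} z_i φ_i(x) where each φ̂_i(x) = φ_i(x)(1+θ_{m(r+1)+1}) with |θ_{m(r+1)+1}| ≤ γ_{m(r+1)+1}, and the inner product ∑ z_i φ̂_i(x) is computed in precision u. Then the computed value ẑ_h satisfies, for all x in a compact set K, |z_h(x) − ẑ_h(x)| ≤ γ_{n + m(r+1)+1} · κ(V_K) · ‖z‖_∞, where κ(V_K) := max_{x∈K} ∑_{i=1}^n |φ_i(x)|. -/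
lemma gamma_add (A B : ℝ) (hA : 0 ≤ A) (hB : 0 ≤ B) (h : A + B < 1) :
    A / (1 - A) + B / (1 - B) + (A / (1 - A)) * (B / (1 - B)) ≤ (A + B) / (1 - (A + B)) := by
  have h1 : 0 < 1 - A := by linarith
  have h2 : 0 < 1 - B := by linarith
  have h3 : 0 < 1 - (A + B) := by linarith
  have key : A / (1 - A) + B / (1 - B) + (A / (1 - A)) * (B / (1 - B))
      = (A + B - A * B) / ((1 - A) * (1 - B)) := by field_simp; ring
  rw [key, div_le_div_iff₀ (by positivity) h3]
  nlinarith [mul_nonneg hA hB]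

theorem stmt10 (d n m r : ℕ) (u : ℝ) (hu : u ∈ Set.Ioo (0 : ℝ) 1)
    (hsmall : u * ((n + m * (r + 1) + 1 : ℕ) : ℝ) < 1)
    (K : Set (Fin d → ℝ)) (hK : IsCompact K)
    (z : Fin n → ℝ) (φ : Fin n → (Fin d → ℝ) → ℝ) (hφc : ∀ i, Continuous (φ i))
    (θ : Fin n → (Fin d → ℝ) → ℝ) (Δz : Fin n → (Fin d → ℝ) → ℝ)
    (hθ : ∀ i, ∀ x ∈ K, |θ i x| ≤
      ((m * (r + 1) + 1 : ℕ) : ℝ) * u / (1 - ((m * (r + 1) + 1 : ℕ) : ℝ) * u))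
    (hΔ : ∀ i, ∀ x ∈ K, |Δz i x| ≤ (n : ℝ) * u / (1 - (n : ℝ) * u) * |z i|)
    (zh zhat : (Fin d → ℝ) → ℝ)
    (hzh : ∀ x, zh x = ∑ i, z i * φ i x)
    (hzhat : ∀ x ∈ K, zhat x = ∑ i, (z i + Δz i x) * (φ i x * (1 + θ i x))) :
    ∀ x ∈ K, |zh x - zhat x| ≤
      ((n + m * (r + 1) + 1 : ℕ) : ℝ) * u / (1 - ((n + m * (r + 1) + 1 : ℕ) : ℝ) * u) *
        sSup ((fun y => ∑ i, |φ i y|) '' K) * ‖z‖ := by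
  intro x hx
  obtain ⟨hu0, hu1⟩ := hu
  set A : ℝ := ((m * (r + 1) + 1 : ℕ) : ℝ) * u with hAdef
  set B : ℝ := (n : ℝ) * u with hBdef
  have hA0 : 0 ≤ A := by positivity
  have hB0 : 0 ≤ B := by positivity
  have hAB : A + B < 1 := by
    have : ((n + m * (r + 1) + 1 : ℕ) : ℝ) = (n : ℝ) + ((m * (r + 1) + 1 : ℕ) : ℝ) := by
      push_cast; ring
    rw [this] at hsmall
    nlinarith
  have hN : ((n + m * (r + 1) + 1 : ℕ) : ℝ) * u = A + B := by
    show _ = ((m * (r + 1) + 1 : ℕ) : ℝ) * u + (n : ℝ) * u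
    push_cast; ring
  set ga : ℝ := A / (1 - A) with hgadef
  set gn : ℝ := B / (1 - B) with hgndef
  set gN : ℝ := ((n + m * (r + 1) + 1 : ℕ) : ℝ) * u / (1 - ((n + m * (r + 1) + 1 : ℕ) : ℝ) * u)
    with hgNdef
  have hgNeq : gN = (A + B) / (1 - (A + B)) := by rw [hgNdef, hN]
  have hga0 : 0 ≤ ga := by
    apply div_nonneg hA0; linarith
  have hgn0 : 0 ≤ gn := by
    apply div_nonneg hB0; linarith
  have hgN0 : 0 ≤ gN := by
    rw [hgNeq]; apply div_nonneg (by linarith); linarith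
  have hsum : ga + gn + ga * gn ≤ gN := by
    rw [hgNeq, hgadef, hgndef]; exact gamma_add A B hA0 hB0 hAB
  -- per-term bound
  have hterm : ∀ i, |z i * φ i x - (z i + Δz i x) * (φ i x * (1 + θ i x))|
      ≤ gN * (|z i| * |φ i x|) := by
    intro i
    have he : |θ i x| ≤ ga := hθ i x hx
    have hd : |Δz i x| ≤ gn * |z i| := hΔ i x hx
    have key : z i * φ i x - (z i + Δz i x) * (φ i x * (1 + θ i x))
        = -(φ i x * (z i * θ i x + Δz i x + Δz i x * θ i x)) := by ring
    rw [key, abs_neg, abs_mul]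
    have h1 : |z i * θ i x + Δz i x + Δz i x * θ i x|
        ≤ |z i| * ga + gn * |z i| + (gn * |z i|) * ga := by
      have t1 : |z i * θ i x| ≤ |z i| * ga := by
        rw [abs_mul]; exact mul_le_mul_of_nonneg_left he (abs_nonneg _)
      have t2 : |Δz i x * θ i x| ≤ (gn * |z i|) * ga := by
        rw [abs_mul]
        exact mul_le_mul hd he (abs_nonneg _) (by positivity)
      calc |z i * θ i x + Δz i x + Δz i x * θ i x|
          ≤ |z i * θ i x + Δz i x| + |Δz i x * θ i x| := abs_add_le _ _
        _ ≤ (|z i * θ i x| + |Δz i x|) + |Δz i x * θ i x| := by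
            gcongr; exact abs_add_le _ _
        _ ≤ |z i| * ga + gn * |z i| + (gn * |z i|) * ga := by gcongr
    calc |φ i x| * |z i * θ i x + Δz i x + Δz i x * θ i x|
        ≤ |φ i x| * ((ga + gn + ga * gn) * |z i|) := by
          apply mul_le_mul_of_nonneg_left _ (abs_nonneg _)
          calc |z i * θ i x + Δz i x + Δz i x * θ i x|
              ≤ |z i| * ga + gn * |z i| + (gn * |z i|) * ga := h1
            _ = (ga + gn + ga * gn) * |z i| := by ring
      _ ≤ |φ i x| * (gN * |z i|) := by
          apply mul_le_mul_of_nonneg_left _ (abs_nonneg _)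
          exact mul_le_mul_of_nonneg_right hsum (abs_nonneg _)
      _ = gN * (|z i| * |φ i x|) := by ring
  have hzi : ∀ i, |z i| ≤ ‖z‖ := by
    intro i
    simpa [Real.norm_eq_abs] using norm_le_pi_norm z i
  -- sSup bound
  have hcont : Continuous fun y : Fin d → ℝ => ∑ i, |φ i y| :=
    continuous_finset_sum _ fun i _ => (hφc i).abs
  have hbdd : BddAbove ((fun y => ∑ i, |φ i y|) '' K) :=
    hK.bddAbove_image hcont.continuousOn
  have hS : ∑ i, |φ i x| ≤ sSup ((fun y => ∑ i, |φ i y|) '' K) :=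
    le_csSup hbdd ⟨x, hx, rfl⟩
  calc |zh x - zhat x|
      = |∑ i, (z i * φ i x - (z i + Δz i x) * (φ i x * (1 + θ i x)))| := by
        rw [hzh x, hzhat x hx, Finset.sum_sub_distrib]
    _ ≤ ∑ i, |z i * φ i x - (z i + Δz i x) * (φ i x * (1 + θ i x))| :=
        Finset.abs_sum_le_sum_abs _ _
    _ ≤ ∑ i, gN * (|z i| * |φ i x|) := Finset.sum_le_sum fun i _ => hterm i
    _ ≤ ∑ i, gN * (‖z‖ * |φ i x|) := by
        apply Finset.sum_le_sum
        intro i _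
        apply mul_le_mul_of_nonneg_left _ hgN0
        exact mul_le_mul_of_nonneg_right (hzi i) (abs_nonneg _)
    _ = gN * ‖z‖ * ∑ i, |φ i x| := by rw [Finset.mul_sum]; ring_nf
    _ ≤ gN * ‖z‖ * sSup ((fun y => ∑ i, |φ i y|) '' K) := by
        apply mul_le_mul_of_nonneg_left hS (by positivity)
    _ = gN * sSup ((fun y => ∑ i, |φ i y|) '' K) * ‖z‖ := by ring
end
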